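/- Let K be a field with discrete valuation v, and let Γ ≤ GL₂(K) be generated by finitely many elements ρ_j = C_j J C_j⁻¹ with J = [[0,-1],[1,0]] and C_j ∈ GL₂(K). Then the following are equivalent: (1) Γ fixes some vertex of the tree T_v; (2) the intersection over j of the sets C_j · Fix_{T_v}(J) is nonempty; (3) for every pair (m,k), the element ρ_m ρ_k fixes some vertex of T_v. -/

import Mathlib

open Matrix
set_option maxHeartbeats 1000000
set_option synthInstance.maxHeartbeats 400000
set_option linter.unusedSectionVars false

variable {K : Type*} [Field K]

/- `matMap O g L` is the image of the O-lattice L ⊆ K² under the matrix g. -/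
noncomputable def matMap (O : Subring K) (g : Matrix (Fin 2) (Fin 2) K)
    (L : Submodule O (Fin 2 → K)) : Submodule O (Fin 2 → K) :=
  Submodule.map ((Matrix.toLin' g).restrictScalars O) L

/- A lattice in K² is a finitely generated O-submodule spanning K² over K. -/
def IsLattice (O : Subring K) (L : Submodule O (Fin 2 → K)) : Prop :=
  L.FG ∧ Submodule.span K (L : Set (Fin 2 → K)) = ⊤

/- Two lattices are equivalent (define the same vertex of the tree T_v) iff
they differ by a scalar in K^×. -/
noncomputable def LatEquiv (O : Subring K) (L L' : Submodule O (Fin 2 → K)) : Prop :=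
  ∃ c : K, c ≠ 0 ∧ matMap O (c • (1 : Matrix (Fin 2) (Fin 2) K)) L = L'

/- g fixes the vertex [L] of the tree T_v iff g·L is equivalent to L. -/
noncomputable def FixesClass (O : Subring K) (g : Matrix (Fin 2) (Fin 2) K)
    (L : Submodule O (Fin 2 → K)) : Prop :=
  LatEquiv O (matMap O g L) L

/- The standard lattice O² ⊆ K². -/
noncomputable def stdLat (O : Subring K) : Submodule O (Fin 2 → K) :=
  Submodule.span O (Set.range fun i : Fin 2 => (Pi.single i 1 : Fin 2 → K))


variable {O : Subring K}

lemma matMap_mul (g h : Matrix (Fin 2) (Fin 2) K) (L : Submodule O (Fin 2 → K)) :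
    matMap O (g * h) L = matMap O g (matMap O h L) := by
  unfold matMap
  rw [← Submodule.map_comp]
  congr 1
  ext x i
  simp [Matrix.toLin'_mul]

lemma matMap_one (L : Submodule O (Fin 2 → K)) : matMap O 1 L = L := by
  unfold matMap
  convert Submodule.map_id L
  ext x i
  simp

lemma matMap_coe (g : Matrix (Fin 2) (Fin 2) K) (L : Submodule O (Fin 2 → K)) :
    (matMap O g L : Set (Fin 2 → K)) = (Matrix.toLin' g) '' (L : Set (Fin 2 → K)) := by
  rfl

lemma smul_one_mul_eq (c : K) (g : Matrix (Fin 2) (Fin 2) K) :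
    (c • (1 : Matrix (Fin 2) (Fin 2) K)) * g = g * (c • (1 : Matrix (Fin 2) (Fin 2) K)) := by
  simp [smul_mul_assoc, mul_smul_comm]

lemma matMap_smul_one_smul_one (c c' : K) (L : Submodule O (Fin 2 → K)) :
    matMap O (c • (1 : Matrix (Fin 2) (Fin 2) K)) (matMap O (c' • 1) L)
      = matMap O ((c * c') • (1 : Matrix (Fin 2) (Fin 2) K)) L := by
  rw [← matMap_mul]
  congr 1
  simp [smul_mul_assoc, mul_smul_comm, smul_smul, mul_comm]

lemma latEquiv_refl (L : Submodule O (Fin 2 → K)) : LatEquiv O L L :=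
  ⟨1, one_ne_zero, by rw [one_smul, matMap_one]⟩

lemma latEquiv_symm {L L' : Submodule O (Fin 2 → K)} (h : LatEquiv O L L') :
    LatEquiv O L' L := by
  obtain ⟨c, hc, hmap⟩ := h
  exact ⟨c⁻¹, inv_ne_zero hc, by
    rw [← hmap, matMap_smul_one_smul_one, inv_mul_cancel₀ hc, one_smul, matMap_one]⟩

lemma latEquiv_trans {L L' L'' : Submodule O (Fin 2 → K)} (h : LatEquiv O L L')
    (h' : LatEquiv O L' L'') : LatEquiv O L L'' := by
  obtain ⟨c, hc, rfl⟩ := h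
  obtain ⟨c', hc', rfl⟩ := h'
  exact ⟨c' * c, mul_ne_zero hc' hc, by rw [matMap_smul_one_smul_one]⟩

lemma latEquiv_map {L L' : Submodule O (Fin 2 → K)} (g : Matrix (Fin 2) (Fin 2) K)
    (h : LatEquiv O L L') : LatEquiv O (matMap O g L) (matMap O g L') := by
  obtain ⟨c, hc, rfl⟩ := h
  refine ⟨c, hc, ?_⟩
  rw [← matMap_mul, smul_one_mul_eq, matMap_mul]

lemma matMap_inv_matMap {g : Matrix (Fin 2) (Fin 2) K} (hg : g.det ≠ 0)
    (L : Submodule O (Fin 2 → K)) : matMap O g⁻¹ (matMap O g L) = L := by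
  rw [← matMap_mul, Matrix.nonsing_inv_mul g (Ne.isUnit hg), matMap_one]

lemma matMap_matMap_inv {g : Matrix (Fin 2) (Fin 2) K} (hg : g.det ≠ 0)
    (L : Submodule O (Fin 2 → K)) : matMap O g (matMap O g⁻¹ L) = L := by
  rw [← matMap_mul, Matrix.mul_nonsing_inv g (Ne.isUnit hg), matMap_one]

lemma latEquiv_map_iff {g : Matrix (Fin 2) (Fin 2) K} (hg : g.det ≠ 0)
    {L L' : Submodule O (Fin 2 → K)} :
    LatEquiv O (matMap O g L) (matMap O g L') ↔ LatEquiv O L L' := by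
  constructor
  · intro h
    have := latEquiv_map (O := O) g⁻¹ h
    rwa [matMap_inv_matMap hg, matMap_inv_matMap hg] at this
  · exact latEquiv_map g

lemma fixesClass_mul {g h : Matrix (Fin 2) (Fin 2) K} {L : Submodule O (Fin 2 → K)}
    (hgL : FixesClass O g L) (hhL : FixesClass O h L) : FixesClass O (g * h) L := by
  unfold FixesClass at *
  rw [matMap_mul]
  exact latEquiv_trans (latEquiv_map g hhL) hgL

lemma isLattice_matMap {g : Matrix (Fin 2) (Fin 2) K} (hg : g.det ≠ 0)
    {L : Submodule O (Fin 2 → K)} (hL : IsLattice O L) : IsLattice O (matMap O g L) := by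
  obtain ⟨hfg, hspan⟩ := hL
  constructor
  · exact Submodule.FG.map _ hfg
  · have himg : Submodule.span K ((Matrix.toLin' g) '' (L : Set (Fin 2 → K)))
        = Submodule.map (Matrix.toLin' g) (Submodule.span K (L : Set (Fin 2 → K))) :=
      Submodule.span_image _
    rw [matMap_coe, himg, hspan, Submodule.map_top, LinearMap.range_eq_top]
    intro y
    refine ⟨Matrix.toLin' g⁻¹ y, ?_⟩
    rw [← Matrix.toLin'_mul_apply, Matrix.mul_nonsing_inv g (Ne.isUnit hg)]
    simp

lemma isLattice_of_latEquiv {L L' : Submodule O (Fin 2 → K)} (h : LatEquiv O L L')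
    (hL : IsLattice O L) : IsLattice O L' := by
  obtain ⟨c, hc, rfl⟩ := h
  refine isLattice_matMap ?_ hL
  simp [Matrix.det_smul, hc]

lemma isLattice_stdLat : IsLattice O (stdLat O) := by
  constructor
  · exact Submodule.fg_span (Set.finite_range _)
  · rw [eq_top_iff]
    intro x _
    have hx : x = ∑ i : Fin 2, x i • (Pi.single i 1 : Fin 2 → K) := by
      ext j
      simp only [Finset.sum_apply, Pi.smul_apply, Pi.single_apply, smul_eq_mul,
        mul_ite, mul_one, mul_zero]
      rw [Finset.sum_eq_single j] <;> simp +contextual [eq_comm]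
    rw [hx]
    refine Submodule.sum_mem _ fun i _ => Submodule.smul_mem _ _ ?_
    exact Submodule.subset_span (Submodule.subset_span (Set.mem_range_self i))

lemma integer_pir (v : Valuation K (WithZero (Multiplicative ℤ))) :
    IsPrincipalIdealRing v.integer := by
  constructor
  intro I
  by_cases hI : I = ⊥
  · exact ⟨0, by rw [hI]; exact Ideal.span_zero.symm⟩
  · -- pick an element of maximal valuation
    obtain ⟨x0, hx0I, hx0⟩ : ∃ x ∈ I, x ≠ 0 := Submodule.exists_mem_ne_zero_of_ne_bot hI
    have key : ∃ n : ℤ, (∃ x ∈ I, x ≠ 0 ∧ v (x : K) = Multiplicative.ofAdd n) ∧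
        ∀ m : ℤ, (∃ x ∈ I, x ≠ 0 ∧ v (x : K) = Multiplicative.ofAdd m) → m ≤ n := by
      apply Int.exists_greatest_of_bdd
      · refine ⟨0, ?_⟩
        rintro m ⟨x, hxI, hx0, hvx⟩
        have hle : v (x : K) ≤ 1 := x.2
        rw [hvx] at hle
        have h1 : ((Multiplicative.ofAdd m : Multiplicative ℤ) : WithZero (Multiplicative ℤ))
            ≤ ((1 : Multiplicative ℤ) : WithZero (Multiplicative ℤ)) := by
          simpa using hle
        rw [WithZero.coe_le_coe] at h1
        exact h1
      · have hvx0 : v (x0 : K) ≠ 0 := by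
          simp only [ne_eq, map_eq_zero]
          exact fun h => hx0 (Subtype.ext h)
        obtain ⟨u, hu⟩ := WithZero.ne_zero_iff_exists.mp hvx0
        exact ⟨Multiplicative.toAdd u, x0, hx0I, hx0, by rw [← hu]; simp⟩
    obtain ⟨n, ⟨a, haI, ha0, hva⟩, hmax⟩ := key
    refine ⟨a, ?_⟩
    ext x
    simp only [Ideal.submodule_span_eq, Ideal.mem_span_singleton]
    constructor
    · intro hxI
      by_cases hx : x = 0
      · exact hx ▸ dvd_zero a
      · have hvx : v (x : K) ≠ 0 := by
          simp only [ne_eq, map_eq_zero]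
          exact fun h => hx (Subtype.ext h)
        obtain ⟨u, hu⟩ := WithZero.ne_zero_iff_exists.mp hvx
        have hm : Multiplicative.toAdd u ≤ n :=
          hmax _ ⟨x, hxI, hx, by rw [← hu]; simp⟩
        have hlev : v (x : K) ≤ v (a : K) := by
          rw [← hu, hva]
          rw [WithZero.coe_le_coe]
          exact hm
        have hb : v ((x : K) / (a : K)) ≤ 1 := by
          rw [Valuation.map_div]
          have hva0 : v (a : K) ≠ 0 := by
            simp only [ne_eq, map_eq_zero]
            exact fun h => ha0 (Subtype.ext h)
          rw [div_le_one₀ (zero_lt_iff.mpr hva0)]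
          exact hlev
        refine ⟨⟨(x : K) / (a : K), hb⟩, ?_⟩
        have hak : (a : K) ≠ 0 := fun h => ha0 (Subtype.ext h)
        apply Subtype.ext
        push_cast
        rw [mul_div_cancel₀ _ hak]
    · rintro ⟨b, rfl⟩
      exact Ideal.mul_mem_right _ _ haI

-- torsion-freeness of K-vector spaces as O-modules
instance subring_noZeroSMulDivisors_base (O : Subring K) : NoZeroSMulDivisors O K := by
  constructor
  intro c x h
  by_cases hc : c = 0
  · exact Or.inl hc
  · refine Or.inr ?_
    have hcK : (c : K) ≠ 0 := fun hh => hc (Subtype.ext hh)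
    have h' : (c : K) * x = 0 := h
    exact (mul_eq_zero.mp h').resolve_left hcK

instance subring_noZeroSMulDivisors (O : Subring K) : NoZeroSMulDivisors O (Fin 2 → K) := by
  constructor
  intro c x h
  by_cases hc : c = 0
  · exact Or.inl hc
  · refine Or.inr ?_
    ext i
    have hi : c • x i = 0 := congr_fun h i
    rcases smul_eq_zero.mp hi with h1 | h2
    · exact absurd h1 hc
    · exact h2

section TraceLemma

variable (v : Valuation K (WithZero (Multiplicative ℤ)))

lemma unit_val_eq_one {u : v.integer} (hu : IsUnit u) : v (u : K) = 1 := by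
  obtain ⟨w, hw⟩ := hu
  have h1 : ((w : v.integer) : K) * (((w⁻¹ : (v.integer)ˣ) : v.integer) : K) = 1 := by
    rw [← Subring.coe_mul]
    norm_cast
    exact_mod_cast w.mul_inv
  have h2 : v ((w : v.integer) : K) * v (((w⁻¹ : (v.integer)ˣ) : v.integer) : K) = 1 := by
    rw [← Valuation.map_mul, h1, Valuation.map_one]
  have hle1 : v ((w : v.integer) : K) ≤ 1 := (w : v.integer).2
  have hle2 : v (((w⁻¹ : (v.integer)ˣ) : v.integer) : K) ≤ 1 := ((w⁻¹ : (v.integer)ˣ) : v.integer).2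
  rw [← hw]
  refine le_antisymm hle1 ?_
  calc (1 : WithZero (Multiplicative ℤ)) = _ * _ := h2.symm
    _ ≤ v ((w : v.integer) : K) * 1 := mul_le_mul_right hle2 _
    _ = v ((w : v.integer) : K) := mul_one _


lemma det_unit_and_trace_int
    {L : Submodule v.integer (Fin 2 → K)} (hL : IsLattice v.integer L)
    {h : Matrix (Fin 2) (Fin 2) K} (hdet : h.det ≠ 0)
    (hmap : matMap v.integer h L = L) :
    v h.det = 1 ∧ v h.trace ≤ 1 := by
  haveI := integer_pir v
  haveI : Module.Finite v.integer L := Module.Finite.iff_fg.mpr hL.1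
  haveI : Module.Free v.integer L := Module.free_of_finite_type_torsion_free'
  set b := Module.Free.chooseBasis v.integer L with hbdef
  set e : Module.Free.ChooseBasisIndex v.integer L → (Fin 2 → K) :=
    fun k => ((b k : L) : Fin 2 → K) with hedef
  have hindO : LinearIndependent v.integer e :=
    b.linearIndependent.map' L.subtype (Submodule.ker_subtype L)
  have hindK : LinearIndependent K e := hindO.localization K (nonZeroDivisors v.integer)
  have hmem : ∀ y : L, (y : Fin 2 → K) = ∑ k, ((b.repr y k : K)) • e k := by
    intro y
    have h2 : L.subtype (∑ k, b.repr y k • b k) = ∑ k, ((b.repr y k : K)) • e k := by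
      rw [map_sum]
      exact Finset.sum_congr rfl fun k _ => by rw [_root_.map_smul, Subring.smul_def]; rfl
    rw [← h2, b.sum_repr y]
    rfl
  have hspanK : ⊤ ≤ Submodule.span K (Set.range e) := by
    rw [← hL.2]
    refine Submodule.span_le.mpr fun y hy => ?_
    rw [show y = ((⟨y, hy⟩ : L) : Fin 2 → K) from rfl, hmem ⟨y, hy⟩]
    exact Submodule.sum_mem _ fun k _ => Submodule.smul_mem _ _
      (Submodule.subset_span (Set.mem_range_self k))
  set bK := Module.Basis.mk hindK hspanK with hbKdef
  have hrepr : ∀ (y : L) k, bK.repr (y : Fin 2 → K) k = (b.repr y k : K) := by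
    intro y k
    have hy : (y : Fin 2 → K) = ∑ j, ((b.repr y j : K)) • bK j := by
      rw [hmem y]
      exact Finset.sum_congr rfl fun j _ => by rw [hbKdef, Module.Basis.mk_apply]
    rw [hy]
    exact congrFun (bK.repr_sum_self _) k
  set φ := Matrix.toLin' h with hφdef
  have hφL : ∀ x ∈ L, φ x ∈ L := by
    intro x hx
    rw [← hmap]
    exact Submodule.mem_map_of_mem hx
  set ψ : L →ₗ[v.integer] L := ((Matrix.toLin' h).restrictScalars v.integer).restrict hφL
    with hψdef
  have hφinj : Function.Injective φ := by
    intro x y hxy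
    have := congrArg (Matrix.toLin' h⁻¹) hxy
    rwa [← Matrix.toLin'_mul_apply, ← Matrix.toLin'_mul_apply,
      Matrix.nonsing_inv_mul h (Ne.isUnit hdet), Matrix.toLin'_one, LinearMap.id_apply,
      LinearMap.id_apply] at this
  have hψbij : Function.Bijective ψ := by
    constructor
    · intro x y hxy
      exact Subtype.ext (hφinj (congrArg Subtype.val hxy : φ (x : Fin 2 → K) = φ y))
    · intro z
      have hz : (z : Fin 2 → K) ∈ matMap v.integer h L := hmap.symm ▸ z.2
      obtain ⟨x, hx, hφx⟩ := hz
      exact ⟨⟨x, hx⟩, Subtype.ext hφx⟩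
  have hunit : IsUnit (LinearMap.det ψ) := by
    have := (LinearEquiv.ofBijective ψ hψbij).isUnit_det'
    exact this
  set Mo := LinearMap.toMatrix b b ψ with hModef
  set MK := LinearMap.toMatrix bK bK φ with hMKdef
  have hMK : MK = (v.integer.subtype).mapMatrix Mo := by
    ext k l
    rw [hMKdef, LinearMap.toMatrix_apply]
    have hbl : bK l = ((b l : L) : Fin 2 → K) := Module.Basis.mk_apply _ _ _
    have hφbl : φ (bK l) = ((ψ (b l) : L) : Fin 2 → K) := by rw [hbl]; rfl
    rw [hφbl, hrepr (ψ (b l)) k]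
    simp [hModef, LinearMap.toMatrix_apply]
  have hdeteq : h.det = ((LinearMap.det ψ : v.integer) : K) := by
    have h1 : LinearMap.det φ = h.det := LinearMap.det_toLin' h
    have h2 : MK.det = LinearMap.det φ := LinearMap.det_toMatrix bK φ
    rw [← h1, ← h2, hMK, ← RingHom.map_det]
    rw [← LinearMap.det_toMatrix b ψ]
    rfl
  have htreq : h.trace = ((Mo.trace : v.integer) : K) := by
    have h1 : LinearMap.trace K (Fin 2 → K) φ = h.trace := by
      rw [LinearMap.trace_eq_matrix_trace K (Pi.basisFun K (Fin 2)) φ,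
        LinearMap.toMatrix_eq_toMatrix', LinearMap.toMatrix'_toLin']
    have h2 : LinearMap.trace K (Fin 2 → K) φ = MK.trace :=
      LinearMap.trace_eq_matrix_trace K bK φ
    rw [← h1, h2, hMK]
    simp [Matrix.trace, Matrix.diag]
  constructor
  · rw [hdeteq]
    exact unit_val_eq_one v hunit
  · rw [htreq]
    exact (Mo.trace).2

end TraceLemma

section Corollaries

variable (v : Valuation K (WithZero (Multiplicative ℤ)))

lemma wz_sq_eq_one {x : WithZero (Multiplicative ℤ)} (hx : x ^ 2 = 1) : x = 1 := by
  have hx0 : x ≠ 0 := by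
    intro h
    rw [h] at hx
    simp at hx
  obtain ⟨u, rfl⟩ := WithZero.ne_zero_iff_exists.mp hx0
  rw [← WithZero.coe_pow, ← WithZero.coe_one, WithZero.coe_inj] at hx
  have h2 := congrArg Multiplicative.toAdd hx
  rw [toAdd_pow] at h2
  have h3 : Multiplicative.toAdd u = 0 := by
    have : (2 : ℕ) • Multiplicative.toAdd u = 2 * Multiplicative.toAdd u := by
      simp [two_mul, two_nsmul]
    rw [this] at h2
    simp only [toAdd_one] at h2
    omega
  rw [← WithZero.coe_one, WithZero.coe_inj]
  have := congrArg Multiplicative.ofAdd h3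
  simpa using this

lemma trace_int_of_fixes {g : Matrix (Fin 2) (Fin 2) K} (hdetg : g.det = 1)
    {L : Submodule v.integer (Fin 2 → K)} (hL : IsLattice v.integer L)
    (hfix : FixesClass v.integer g L) : g.trace ∈ v.integer := by
  obtain ⟨c, hc, hmap⟩ := hfix
  have hcg : (c • (1 : Matrix (Fin 2) (Fin 2) K)) * g = c • g := by
    rw [smul_mul_assoc, one_mul]
  have hmap' : matMap v.integer (c • g) L = L := by
    rw [← hcg, matMap_mul]
    exact hmap
  have hdet : (c • g).det ≠ 0 := by
    rw [Matrix.det_smul, hdetg, mul_one]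
    exact pow_ne_zero _ hc
  obtain ⟨hdet1, htr⟩ := det_unit_and_trace_int v hL hdet hmap'
  have hvc : v c = 1 := by
    rw [Matrix.det_smul, hdetg, mul_one, map_pow] at hdet1
    exact wz_sq_eq_one hdet1
  rw [Valuation.mem_integer_iff]
  have htr2 : v (c • g).trace = v c * v g.trace := by
    rw [Matrix.trace_smul, smul_eq_mul, Valuation.map_mul]
  calc v g.trace = v c * v g.trace := by rw [hvc, one_mul]
    _ = v (c • g).trace := htr2.symm
    _ ≤ 1 := htr

end Corollaries

-- 2x2 matrix identities
lemma anticomm_of_traceless {X Y : Matrix (Fin 2) (Fin 2) K}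
    (hX : X.trace = 0) (hY : Y.trace = 0) :
    X * Y + Y * X = (X * Y).trace • (1 : Matrix (Fin 2) (Fin 2) K) := by
  rw [Matrix.trace_fin_two] at hX hY
  have hX' : X 1 1 = -X 0 0 := by linear_combination hX
  have hY' : Y 1 1 = -Y 0 0 := by linear_combination hY
  rw [Matrix.eta_fin_two X, Matrix.eta_fin_two Y, hX', hY']
  ext i j
  rw [Matrix.trace_fin_two]
  fin_cases i <;> fin_cases j <;>
    simp [Matrix.mul_apply, Fin.sum_univ_two, Matrix.one_apply] <;> ring

section Words

variable {ι : Type*} [LinearOrder ι] (O : Subring K) (ρ : ι → Matrix (Fin 2) (Fin 2) K)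

noncomputable def wordProd (s : Finset ι) : Matrix (Fin 2) (Fin 2) K :=
  ((s.sort (· ≤ ·)).map ρ).prod

lemma wordProd_empty : wordProd ρ (∅ : Finset ι) = 1 := by
  simp [wordProd]

lemma wordProd_insert (a : ι) (s : Finset ι) (h1 : ∀ b ∈ s, a ≤ b) (h2 : a ∉ s) :
    wordProd ρ (insert a s) = ρ a * wordProd ρ s := by
  unfold wordProd
  rw [Finset.sort_insert _ h1 h2]
  simp

lemma straighten_aux (hsq : ∀ i, ρ i * ρ i = -1)
    (hanti : ∀ i j, ρ i * ρ j + ρ j * ρ i = (ρ i * ρ j).trace • (1 : Matrix (Fin 2) (Fin 2) K))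
    (ht : ∀ i j, (ρ i * ρ j).trace ∈ O) :
    ∀ (n : ℕ) (s : Finset ι), s.card ≤ n → ∀ i : ι,
      ρ i * wordProd ρ s ∈
        Submodule.span O (wordProd ρ '' {u : Finset ι | u ⊆ insert i s}) := by
  intro n
  induction n with
  | zero =>
    intro s hs i
    rw [Nat.le_zero, Finset.card_eq_zero] at hs
    subst hs
    rw [wordProd_empty, mul_one]
    refine Submodule.subset_span ⟨{i}, ?_, ?_⟩
    · intro x hx
      simpa using Finset.mem_singleton.mp hx
    · rw [show ({i} : Finset ι) = insert i ∅ from rfl,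
        wordProd_insert ρ i ∅ (by simp) (by simp), wordProd_empty, mul_one]
  | succ n ih =>
    intro s hs i
    by_cases hse : s = ∅
    · subst hse
      exact ih ∅ (by simp) i
    · have hne : s.Nonempty := Finset.nonempty_iff_ne_empty.mpr hse
      set a := s.min' hne with ha
      set t := s.erase a with hts
      have hat : a ∉ t := Finset.notMem_erase a s
      have hins : s = insert a t := (Finset.insert_erase (s.min'_mem hne)).symm
      have htlt : ∀ x ∈ t, a < x := by
        intro x hx
        exact lt_of_le_of_ne (s.min'_le x (Finset.mem_of_mem_erase hx))
          (Ne.symm (Finset.ne_of_mem_erase hx))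
      have hWs : wordProd ρ s = ρ a * wordProd ρ t := by
        rw [hins]
        exact wordProd_insert ρ a t (fun b hb => (htlt b hb).le) hat
      have htcard : t.card ≤ n := by
        have h1 : t.card = s.card - 1 := Finset.card_erase_of_mem (s.min'_mem hne)
        have h2 : 0 < s.card := Finset.card_pos.mpr hne
        omega
      rcases lt_trichotomy i a with hlt | heq | hgt
      · -- i < a : already sorted
        have hnotmem : i ∉ s := fun hmem => absurd (s.min'_le i hmem) (not_le.mpr hlt)
        have : ρ i * wordProd ρ s = wordProd ρ (insert i s) :=
          (wordProd_insert ρ i s (fun b hb => (lt_of_lt_of_le hlt (s.min'_le b hb)).le)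
            hnotmem).symm
        rw [this]
        exact Submodule.subset_span ⟨insert i s, fun x hx => hx, rfl⟩
      · -- i = a : square to -1
        rw [heq, hWs, ← mul_assoc, hsq a, neg_one_mul]
        refine neg_mem (Submodule.subset_span ⟨t, ?_, rfl⟩)
        intro x hx
        rw [hins]
        exact Finset.mem_insert_of_mem (Finset.mem_insert_of_mem hx)
      · -- a < i : swap
        have hswap : ρ i * ρ a = (ρ i * ρ a).trace • (1 : Matrix (Fin 2) (Fin 2) K)
            - ρ a * ρ i := by
          rw [← hanti i a]
          exact (add_sub_cancel_right _ _).symm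
        rw [hWs, ← mul_assoc, hswap, sub_mul, smul_mul_assoc, one_mul, mul_assoc]
        refine sub_mem ?_ ?_
        · have : (ρ i * ρ a).trace • wordProd ρ t
              = (⟨(ρ i * ρ a).trace, ht i a⟩ : O) • wordProd ρ t := by
            rw [Subring.smul_def]
          rw [this]
          refine Submodule.smul_mem _ _ (Submodule.subset_span ⟨t, ?_, rfl⟩)
          intro x hx
          rw [hins]
          exact Finset.mem_insert_of_mem (Finset.mem_insert_of_mem hx)
        · -- ρ a * (ρ i * wordProd t)
          have hIH := ih t htcard i
          have key : ∀ x ∈ Submodule.span O (wordProd ρ '' {u : Finset ι | u ⊆ insert i t}),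
              ρ a * x ∈ Submodule.span O (wordProd ρ '' {u : Finset ι | u ⊆ insert i s}) := by
            intro x hx
            induction hx using Submodule.span_induction with
            | mem y hy =>
              obtain ⟨u, hu, rfl⟩ := hy
              have hau : a ∉ u := by
                intro hmem
                rcases Finset.mem_insert.mp (hu hmem) with h' | h'
                · exact absurd h' (ne_of_lt hgt)
                · exact hat h'
              have hau2 : ∀ b ∈ u, a ≤ b := by
                intro b hb
                rcases Finset.mem_insert.mp (hu hb) with h' | h'
                · exact h' ▸ hgt.le
                · exact (htlt b h').le
              rw [← wordProd_insert ρ a u hau2 hau]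
              refine Submodule.subset_span ⟨insert a u, ?_, rfl⟩
              intro x hx
              rcases Finset.mem_insert.mp hx with h' | h'
              · subst h'
                rw [hins]
                exact Finset.mem_insert_of_mem (Finset.mem_insert_self a t)
              · rcases Finset.mem_insert.mp (hu h') with h'' | h''
                · exact h'' ▸ Finset.mem_insert_self i s
                · rw [hins]
                  exact Finset.mem_insert_of_mem (Finset.mem_insert_of_mem h'')
            | zero => rw [mul_zero]; exact Submodule.zero_mem _
            | add y z _ _ hy hz => rw [mul_add]; exact Submodule.add_mem _ hy hz
            | smul c y _ hy => rw [mul_smul_comm]; exact Submodule.smul_mem _ _ hy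
          exact key _ hIH

end Words

section Build

variable {ι : Type*} [Fintype ι] [LinearOrder ι] {O : Subring K}
variable (O) in
noncomputable def bigLat (ρ : ι → Matrix (Fin 2) (Fin 2) K) : Submodule O (Fin 2 → K) :=
  ⨆ s : Finset ι, matMap O (wordProd ρ s) (stdLat O)

variable (ρ : ι → Matrix (Fin 2) (Fin 2) K)

lemma matMap_neg_one (L : Submodule O (Fin 2 → K)) : matMap O (-1) L = L := by
  have key : ∀ x : Fin 2 → K, (Matrix.toLin' (-1 : Matrix (Fin 2) (Fin 2) K)) x = -x := by
    intro x
    rw [map_neg, Matrix.toLin'_one]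
    rfl
  ext y
  constructor
  · rintro ⟨x, hx, rfl⟩
    simp only [LinearMap.restrictScalars_apply]
    rw [key x]
    exact neg_mem hx
  · intro hy
    refine ⟨-y, neg_mem hy, ?_⟩
    simp only [LinearMap.restrictScalars_apply]
    rw [key (-y)]
    exact neg_neg y

lemma matMap_le_of_mem_span {X : Matrix (Fin 2) (Fin 2) K} {U : Set (Finset ι)}
    (hX : X ∈ Submodule.span O (wordProd ρ '' U)) :
    matMap O X (stdLat O) ≤ bigLat O ρ := by
  induction hX using Submodule.span_induction with
  | mem Y hY =>
    obtain ⟨u, _, rfl⟩ := hY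
    exact le_iSup (fun s : Finset ι => matMap O (wordProd ρ s) (stdLat O)) u
  | zero =>
    rintro y ⟨x, hx, rfl⟩
    simp only [LinearMap.restrictScalars_apply, map_zero, LinearMap.zero_apply]
    exact Submodule.zero_mem _
  | add Y Z _ _ hY hZ =>
    rintro y ⟨x, hx, rfl⟩
    simp only [LinearMap.restrictScalars_apply, map_add, LinearMap.add_apply]
    exact Submodule.add_mem _ (hY ⟨x, hx, rfl⟩) (hZ ⟨x, hx, rfl⟩)
  | smul c Y _ hY =>
    rintro y ⟨x, hx, rfl⟩
    simp only [LinearMap.restrictScalars_apply]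
    rw [Subring.smul_def, _root_.map_smul, LinearMap.smul_apply]
    have : (c : K) • (Matrix.toLin' Y) x = c • (Matrix.toLin' Y) x := by
      rw [Subring.smul_def]
    rw [this]
    exact Submodule.smul_mem _ _ (hY ⟨x, hx, rfl⟩)

lemma bigLat_fixed (hsq : ∀ i, ρ i * ρ i = -1)
    (hanti : ∀ i j, ρ i * ρ j + ρ j * ρ i = (ρ i * ρ j).trace • (1 : Matrix (Fin 2) (Fin 2) K))
    (ht : ∀ i j, (ρ i * ρ j).trace ∈ O) (i : ι) :
    matMap O (ρ i) (bigLat O ρ) = bigLat O ρ := by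
  have hle : matMap O (ρ i) (bigLat O ρ) ≤ bigLat O ρ := by
    unfold bigLat matMap
    rw [Submodule.map_iSup]
    refine iSup_le fun s => ?_
    have h1 : Submodule.map ((Matrix.toLin' (ρ i)).restrictScalars O)
        (Submodule.map ((Matrix.toLin' (wordProd ρ s)).restrictScalars O) (stdLat O))
        = matMap O (ρ i * wordProd ρ s) (stdLat O) := (matMap_mul _ _ _).symm
    rw [h1]
    exact matMap_le_of_mem_span ρ
      (straighten_aux O ρ hsq hanti ht s.card s le_rfl i)
  refine le_antisymm hle ?_
  have h2 : matMap O (ρ i) (matMap O (ρ i) (bigLat O ρ)) = bigLat O ρ := by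
    rw [← matMap_mul, hsq i, matMap_neg_one]
  calc bigLat O ρ = matMap O (ρ i) (matMap O (ρ i) (bigLat O ρ)) := h2.symm
    _ ≤ matMap O (ρ i) (bigLat O ρ) := Submodule.map_mono hle

lemma bigLat_isLattice : IsLattice O (bigLat O ρ) := by
  constructor
  · refine Submodule.fg_iSup _ fun s => ?_
    exact Submodule.FG.map _ (Submodule.fg_span (Set.finite_range _))
  · have hsub : (stdLat O : Set (Fin 2 → K)) ⊆ (bigLat O ρ : Set (Fin 2 → K)) := by
      have : stdLat O ≤ bigLat O ρ := by
        have h0 : matMap O (wordProd ρ (∅ : Finset ι)) (stdLat O) = stdLat O := by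
          rw [wordProd_empty, matMap_one]
        rw [← h0]
        exact le_iSup (fun s : Finset ι => matMap O (wordProd ρ s) (stdLat O)) ∅
      exact this
    rw [eq_top_iff, ← (isLattice_stdLat (O := O)).2]
    exact Submodule.span_mono hsub

end Build

lemma Jmat_det : (!![0, -1; 1, 0] : Matrix (Fin 2) (Fin 2) K).det = 1 := by
  simp [Matrix.det_fin_two_of]

lemma Jmat_sq : (!![0, -1; 1, 0] : Matrix (Fin 2) (Fin 2) K) * !![0, -1; 1, 0] = -1 := by
  ext i j
  fin_cases i <;> fin_cases j <;>
    simp [Matrix.mul_apply, Fin.sum_univ_two, Matrix.one_apply]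

theorem stmt_8' {ι : Type*} [Fintype ι]
    (v : Valuation K (WithZero (Multiplicative ℤ)))
    (C : ι → Matrix (Fin 2) (Fin 2) K) (hC : ∀ j, (C j).det ≠ 0)
    (ρ : ι → Matrix (Fin 2) (Fin 2) K)
    (hρ : ∀ j, ρ j = C j * !![0, -1; 1, 0] * (C j)⁻¹) :
    ((∃ L : Submodule v.integer (Fin 2 → K), IsLattice v.integer L ∧
        ∀ j, FixesClass v.integer (ρ j) L) ↔
      (∃ L : Submodule v.integer (Fin 2 → K), IsLattice v.integer L ∧
        ∀ j, ∃ L' : Submodule v.integer (Fin 2 → K), IsLattice v.integer L' ∧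
          FixesClass v.integer !![0, -1; 1, 0] L' ∧
          LatEquiv v.integer (matMap v.integer (C j) L') L)) ∧
    ((∃ L : Submodule v.integer (Fin 2 → K), IsLattice v.integer L ∧
        ∀ j, FixesClass v.integer (ρ j) L) ↔
      (∀ m k, ∃ L : Submodule v.integer (Fin 2 → K), IsLattice v.integer L ∧
        FixesClass v.integer (ρ m * ρ k) L)) := by
  set J : Matrix (Fin 2) (Fin 2) K := !![0, -1; 1, 0] with hJdef
  have hCinv : ∀ j, ((C j)⁻¹).det ≠ 0 := by
    intro j
    rw [Matrix.det_nonsing_inv, Ring.inverse_eq_inv']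
    exact inv_ne_zero (hC j)
  have hinvC : ∀ j, (C j)⁻¹ * C j = 1 := fun j => Matrix.nonsing_inv_mul _ (Ne.isUnit (hC j))
  have hCinv' : ∀ j, C j * (C j)⁻¹ = 1 := fun j => Matrix.mul_nonsing_inv _ (Ne.isUnit (hC j))
  have hdetρ : ∀ j, (ρ j).det = 1 := by
    intro j
    rw [hρ j, Matrix.det_mul, Matrix.det_mul, Matrix.det_nonsing_inv, Ring.inverse_eq_inv',
      hJdef, Jmat_det, mul_one]
    field_simp [hC j]
  have htr0 : ∀ j, (ρ j).trace = 0 := by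
    intro j
    rw [hρ j, Matrix.trace_mul_comm (C j * J) ((C j)⁻¹), ← mul_assoc, hinvC j, one_mul]
    simp [hJdef, Matrix.trace_fin_two]
  have hsqρ : ∀ j, ρ j * ρ j = -1 := by
    intro j
    rw [hρ j]
    have h1 : C j * J * (C j)⁻¹ * (C j * J * (C j)⁻¹)
        = C j * (J * (((C j)⁻¹ * C j) * J)) * (C j)⁻¹ := by noncomm_ring
    rw [h1, hinvC j, one_mul, hJdef, Jmat_sq]
    rw [mul_neg_one, neg_mul, hCinv' j]
  have hanti : ∀ i j, ρ i * ρ j + ρ j * ρ i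
      = (ρ i * ρ j).trace • (1 : Matrix (Fin 2) (Fin 2) K) :=
    fun i j => anticomm_of_traceless (htr0 i) (htr0 j)
  constructor
  · -- (1) ↔ (2)
    constructor
    · rintro ⟨L, hLlat, hfix⟩
      refine ⟨L, hLlat, fun j => ?_⟩
      refine ⟨matMap v.integer (C j)⁻¹ L, isLattice_matMap (hCinv j) hLlat, ?_, ?_⟩
      · -- FixesClass J (C⁻¹ L)
        have h1 := hfix j
        unfold FixesClass at h1 ⊢
        rw [hρ j] at h1
        have h2 : matMap v.integer (C j * J * (C j)⁻¹) L
            = matMap v.integer (C j) (matMap v.integer J (matMap v.integer (C j)⁻¹ L)) := by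
          rw [← matMap_mul, ← matMap_mul]
        rw [h2] at h1
        have h4 := latEquiv_map (O := v.integer) (C j)⁻¹ h1
        rw [matMap_inv_matMap (hC j)] at h4
        exact h4
      · rw [matMap_matMap_inv (hC j) L]
        exact latEquiv_refl L
    · rintro ⟨L, hLlat, hfix⟩
      refine ⟨L, hLlat, fun j => ?_⟩
      obtain ⟨L', hL'lat, hfixJ, hequiv⟩ := hfix j
      unfold FixesClass at hfixJ ⊢
      have e1 : LatEquiv v.integer (matMap v.integer (ρ j) L)
          (matMap v.integer (ρ j) (matMap v.integer (C j) L')) :=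
        latEquiv_map _ (latEquiv_symm hequiv)
      have e2 : matMap v.integer (ρ j) (matMap v.integer (C j) L')
          = matMap v.integer (C j) (matMap v.integer J L') := by
        rw [← matMap_mul, ← matMap_mul, hρ j, mul_assoc, hinvC j, mul_one]
      have e3 : LatEquiv v.integer (matMap v.integer (C j) (matMap v.integer J L'))
          (matMap v.integer (C j) L') := latEquiv_map _ hfixJ
      exact latEquiv_trans (latEquiv_trans e1 (e2 ▸ latEquiv_refl _)) (latEquiv_trans e3 hequiv)
  · -- (1) ↔ (3)
    constructor
    · rintro ⟨L, hLlat, hfix⟩ m k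
      exact ⟨L, hLlat, fixesClass_mul (hfix m) (hfix k)⟩
    · intro h3
      have ht : ∀ m k, (ρ m * ρ k).trace ∈ v.integer := by
        intro m k
        obtain ⟨L, hLlat, hfixmk⟩ := h3 m k
        refine trace_int_of_fixes v ?_ hLlat hfixmk
        rw [Matrix.det_mul, hdetρ m, hdetρ k, one_mul]
      letI : LinearOrder ι := LinearOrder.lift' (Fintype.equivFin ι) (Equiv.injective _)
      refine ⟨bigLat v.integer ρ, bigLat_isLattice ρ, fun j => ?_⟩
      refine ⟨1, one_ne_zero, ?_⟩
      rw [one_smul, matMap_one]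
      exact bigLat_fixed ρ hsqρ hanti ht j

/- STATEMENT 8: K a field with discrete valuation v, Γ ≤ GL₂(K) generated by
finitely many ρ_j = C_j J C_j⁻¹ with J = [[0,-1],[1,0]] and C_j ∈ GL₂(K).
The following are equivalent:
(1) Γ stabilizes a vertex of T_v (equivalently, some lattice class is fixed by
    every generator ρ_j);
(2) ⋂_j C_j · Fix_{T_v}(J) ≠ ∅, i.e. some lattice class lies in C_j·Fix(J) for
    every j;
(3) for every pair (m,k), ρ_m ρ_k fixes some vertex of T_v. -/
theorem stmt_8 {ι : Type*} [Fintype ι]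
    (v : Valuation K (WithZero (Multiplicative ℤ)))
    (hdisc : Function.Surjective v)
    (C : ι → Matrix (Fin 2) (Fin 2) K) (hC : ∀ j, (C j).det ≠ 0)
    (ρ : ι → Matrix (Fin 2) (Fin 2) K)
    (hρ : ∀ j, ρ j = C j * !![0, -1; 1, 0] * (C j)⁻¹) :
    ((∃ L : Submodule v.integer (Fin 2 → K), IsLattice v.integer L ∧
        ∀ j, FixesClass v.integer (ρ j) L) ↔
      (∃ L : Submodule v.integer (Fin 2 → K), IsLattice v.integer L ∧
        ∀ j, ∃ L' : Submodule v.integer (Fin 2 → K), IsLattice v.integer L' ∧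
          FixesClass v.integer !![0, -1; 1, 0] L' ∧
          LatEquiv v.integer (matMap v.integer (C j) L') L)) ∧
    ((∃ L : Submodule v.integer (Fin 2 → K), IsLattice v.integer L ∧
        ∀ j, FixesClass v.integer (ρ j) L) ↔
      (∀ m k, ∃ L : Submodule v.integer (Fin 2 → K), IsLattice v.integer L ∧
        FixesClass v.integer (ρ m * ρ k) L)) :=
  stmt_8' v C hC ρ hρ
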